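/- For every (ξ₁, ξ₂) ∈ ℝ² with ξ₂ ≥ 1 one has |X(ξ₁, ξ₂)| ≤ 2 exp(−2 ξ₂). (Exponential decay of the boundary-layer function X as ξ₂ → +∞, uniformly in ξ₁.) -/

import Mathlib

/-- The boundary-layer function `X(ξ) = Re ln sin z + ln 2 − ξ₂`, `z = ξ₁ + i ξ₂`. -/
noncomputable def boundaryLayerX (ξ : ℝ × ℝ) : ℝ :=
  Real.log ‖Complex.sin ((ξ.1 : ℂ) + (ξ.2 : ℂ) * Complex.I)‖ +
    Real.log 2 - ξ.2

/-- Exponential decay of the boundary-layer function `X` as `ξ₂ → +∞`: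
`|X(ξ₁, ξ₂)| ≤ 2 exp(−2 ξ₂)` for `ξ₂ ≥ 1`, uniformly in `ξ₁`. -/
theorem boundaryLayerX_decay (ξ₁ ξ₂ : ℝ) (h : 1 ≤ ξ₂) :
    |boundaryLayerX (ξ₁, ξ₂)| ≤ 2 * Real.exp (-2 * ξ₂) := by
  set z : ℂ := (ξ₁ : ℂ) + (ξ₂ : ℂ) * Complex.I with hz
  have hmul : Complex.exp (-z*Complex.I) * Complex.exp (2*z*Complex.I)
      = Complex.exp (z*Complex.I) := by
    rw [← Complex.exp_add]; ring_nf
  have hfac : Complex.sin z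
      = (Complex.exp (-z*Complex.I) * (1 - Complex.exp (2*z*Complex.I))) * Complex.I / 2 := by
    rw [Complex.sin, mul_one_sub, hmul]
  have hre1 : (-z*Complex.I).re = ξ₂ := by simp [hz]
  have hre2 : (2*z*Complex.I).re = -2*ξ₂ := by simp [hz]
  set A : ℝ := ‖1 - Complex.exp (2*z*Complex.I)‖ with hA
  have habs : ‖Complex.sin z‖ = Real.exp ξ₂ * A / 2 := by
    rw [hfac, norm_div, norm_mul, norm_mul, Complex.norm_exp, Complex.norm_I, Complex.norm_two, hre1]
    ring
  set r : ℝ := Real.exp (-2*ξ₂) with hrdef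
  have hrpos : 0 < r := Real.exp_pos _
  have habsw : ‖Complex.exp (2*z*Complex.I)‖ = r := by
    rw [Complex.norm_exp, hre2]
  have hexp2 : (2:ℝ) ≤ Real.exp 2 := by nlinarith [Real.add_one_le_exp (2:ℝ)]
  have hr2 : r ≤ 1/2 := by
    have h1 : r ≤ Real.exp (-2) := Real.exp_le_exp.2 (by linarith)
    have h2 : Real.exp (-2) ≤ 1/2 := by
      rw [Real.exp_neg]
      rw [inv_le_comm₀ (Real.exp_pos 2) (by norm_num)]
      linarith
    linarith
  -- bounds on A
  have hAub : A ≤ 1 + r := by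
    calc A ≤ ‖(1:ℂ)‖ + ‖Complex.exp (2*z*Complex.I)‖ :=
          norm_sub_le _ _
      _ = 1 + r := by rw [habsw, norm_one]
  have hAlb : 1 - r ≤ A := by
    have h0 := norm_add_le (1 - Complex.exp (2*z*Complex.I)) (Complex.exp (2*z*Complex.I))
    simp only [sub_add_cancel, norm_one, habsw] at h0
    linarith
  have hApos : 0 < A := by linarith
  -- X = log A
  have hX : boundaryLayerX (ξ₁, ξ₂) = Real.log A := by
    show Real.log ‖Complex.sin z‖ + Real.log 2 - ξ₂ = Real.log A
    rw [habs, Real.log_div (by positivity) (by norm_num),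
      Real.log_mul (by positivity) (ne_of_gt hApos), Real.log_exp]
    ring
  rw [hX, abs_le]
  constructor
  · -- lower bound: -2r ≤ log A, i.e. -log A ≤ 2r
    have h1 : Real.log A⁻¹ ≤ A⁻¹ - 1 := Real.log_le_sub_one_of_pos (by positivity)
    rw [Real.log_inv] at h1
    have hAinv : A⁻¹ - 1 ≤ 2*r := by
      rw [inv_eq_one_div, div_sub' (ne_of_gt hApos), div_le_iff₀ hApos]
      nlinarith
    nlinarith
  · have h1 : Real.log A ≤ A - 1 := Real.log_le_sub_one_of_pos hApos
    nlinarith
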